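/- Let Γ = ⟨ω, R, ∈⟩ be a countable random bipartite graph and G a countable group of automorphisms of Γ. Then there exist two countable random bipartite graphs Γ⁰ = ⟨ω, R⁰, ∈⟩ and Γ¹ = ⟨ω, R¹, ∈⟩ properly extending Γ (R ⊊ R⁰, R ⊊ R¹) such that every element of G extends to an automorphism structure on each Γⁱ (i.e., R⁰ and R¹ are closed under the induced action of G), and Γ⁰ and Γ¹ are incompatible: there is no random bipartite graph ⟨ω, R', ∈⟩ with R⁰ ∪ R¹ ⊆ R'. -/

import Mathlib

/-- The Boolean combination determined by the finite "pattern" given by positive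
part `P` and negative part `N` (a finite partial function to `{+,-}`). -/
def BSigma (P N : Finset (Set ℕ)) : Set ℕ :=
  {x | (∀ A ∈ P, x ∈ A) ∧ (∀ A ∈ N, x ∉ A)}

/-- The bipartite graph `⟨ω, R, ∈⟩` is random. -/
def SetRandom (R : Set (Set ℕ)) : Prop :=
  (∀ X Y : Finset ℕ, Disjoint X Y →
    {A ∈ R | (∀ x ∈ X, x ∈ A) ∧ (∀ y ∈ Y, y ∉ A)}.Infinite) ∧
  (∀ P N : Finset (Set ℕ), ↑P ⊆ R → ↑N ⊆ R → Disjoint P N → (BSigma P N).Infinite)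

/-- A (side-respecting) automorphism of the bipartite graph `⟨ω, R, ∈⟩`:
by extensionality it is determined by a bijection of `ω` whose induced action
`A ↦ g '' A` is a bijection of `R`. -/
def IsSetAuto (R : Set (Set ℕ)) (g : ℕ → ℕ) : Prop :=
  Function.Bijective g ∧ Set.BijOn (fun A => g '' A) R R

/-- `⟨ω, R, ∈⟩` is homogeneous: every finite partial side-respecting
automorphism (given by `p` on finitely many left vertices and `q` on finitely
many right vertices, preserving edges and non-edges) extends to a total
automorphism. -/
def SetHomog (R : Set (Set ℕ)) : Prop :=
  ∀ (s : Finset ℕ) (t : Finset (Set ℕ)), ↑t ⊆ R →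
    ∀ (p : ℕ → ℕ) (q : Set ℕ → Set ℕ),
      Set.InjOn p ↑s → Set.InjOn q ↑t → (∀ A ∈ t, q A ∈ R) →
      (∀ x ∈ s, ∀ A ∈ t, (x ∈ A ↔ p x ∈ q A)) →
      ∃ g : ℕ → ℕ, IsSetAuto R g ∧ (∀ x ∈ s, g x = p x) ∧ (∀ A ∈ t, g '' A = q A)

def SetComplete (R : Set (Set ℕ)) : Prop := ∀ A ∈ R, ∀ x : ℕ, x ∈ A

def SetEmptyG (R : Set (Set ℕ)) : Prop := ∀ A ∈ R, ∀ x : ℕ, x ∉ A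

open Classical Set

noncomputable section IncompatAux

abbrev Pm := Equiv.Perm ℕ

variable (R : Set (Set ℕ)) (G : Subgroup Pm)

/-- kernel of the action of `G` on `R` -/
def Kker : Set Pm := {k | k ∈ G ∧ ∀ B ∈ R, ⇑k '' B = B}

theorem Kker_one : (1 : Pm) ∈ Kker R G := ⟨one_mem G, fun B _ => by simp⟩

theorem Kker_inv {k : Pm} (hk : k ∈ Kker R G) : k⁻¹ ∈ Kker R G := by
  refine ⟨inv_mem hk.1, fun B hB => ?_⟩
  conv_lhs => rw [← hk.2 B hB]
  rw [Set.image_image]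
  simp

theorem Kker_mul {k k' : Pm} (hk : k ∈ Kker R G) (hk' : k' ∈ Kker R G) :
    k * k' ∈ Kker R G := by
  refine ⟨mul_mem hk.1 hk'.1, fun B hB => ?_⟩
  rw [Equiv.Perm.coe_mul, Set.image_comp, hk'.2 B hB, hk.2 B hB]

theorem Kker_img_mem {k : Pm} (hk : k ∈ Kker R G) {B : Set ℕ} (hB : B ∈ R) {b : ℕ}
    (hb : ⇑k b ∈ B) : b ∈ B := by
  have h := hk.2 B hB
  rw [← h] at hb
  obtain ⟨c, hc, hcb⟩ := hb
  rwa [← k.injective hcb]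

variable {R G}
variable (hr : SetRandom R) (hGaut : ∀ g ∈ G, Set.BijOn (fun A => ⇑g '' A) R R)

section
include hGaut

theorem mapsR {g : Pm} (hg : g ∈ G) {B : Set ℕ} (hB : B ∈ R) : ⇑g '' B ∈ R :=
  (hGaut g hg).mapsTo hB

end

section
include hr

/-- point separation -/
theorem sepR {x y : ℕ} (hxy : x ≠ y) : {B | B ∈ R ∧ x ∈ B ∧ y ∉ B}.Infinite := by
  have h := hr.1 {x} {y} (by simpa using hxy)
  refine h.mono ?_
  intro A hA
  simp only [Set.mem_setOf_eq, Finset.mem_singleton] at hA ⊢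
  exact ⟨hA.1, hA.2.1 x rfl, hA.2.2 y rfl⟩

theorem avoidR (b : ℕ) : {B | B ∈ R ∧ b ∉ B}.Infinite := by
  have h := hr.1 ∅ {b} (by simp)
  refine h.mono ?_
  intro A hA
  simp only [Set.mem_setOf_eq, Finset.mem_singleton] at hA ⊢
  exact ⟨hA.1, hA.2.2 b rfl⟩

end

section
include hr hGaut

/-- the moving lemma: an element of `G` which moves one member of `R` moves
infinitely many. -/
theorem movedR {τ : Pm} (hτG : τ ∈ G) {A₀ : Set ℕ} (hA₀ : A₀ ∈ R)
    (hmv : ⇑τ '' A₀ ≠ A₀) : {B | B ∈ R ∧ ⇑τ '' B ≠ B}.Infinite := by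
  have hA₁ : ⇑τ '' A₀ ∈ R := mapsR hGaut hτG hA₀
  have hne : A₀ ≠ ⇑τ '' A₀ := fun h => hmv h.symm
  have hBS : (BSigma {A₀} {⇑τ '' A₀}).Infinite := by
    refine hr.2 {A₀} {⇑τ '' A₀} (by simpa using hA₀) (by simpa using hA₁) (by simpa using hne)
  obtain ⟨x, hx⟩ := hBS.nonempty
  simp only [BSigma, Set.mem_setOf_eq, Finset.mem_singleton, forall_eq] at hx
  have hxy : x ≠ ⇑τ x := by
    intro h
    exact hx.2 (h ▸ Set.mem_image_of_mem _ hx.1)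
  refine (sepR hr hxy).mono ?_
  rintro B ⟨hBR, hxB, hyB⟩
  refine ⟨hBR, fun h => hyB ?_⟩
  rw [← h]; exact Set.mem_image_of_mem _ hxB

omit hr hGaut in
theorem BSigma_mono {P N P' N' : Finset (Set ℕ)} (hP : P ⊆ P') (hN : N ⊆ N') :
    BSigma P' N' ⊆ BSigma P N := by
  intro x hx
  exact ⟨fun A hA => hx.1 A (hP hA), fun A hA => hx.2 A (hN hA)⟩

omit hr hGaut in
theorem img_mul (g h : Pm) (B : Set ℕ) : ⇑(g * h) '' B = ⇑g '' (⇑h '' B) := by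
  rw [Equiv.Perm.coe_mul, Set.image_comp]

theorem refine_one {g h : Pm} (hg : g ∈ G) (hh : h ∈ G)
    (hsep : ∃ B ∈ R, ⇑g '' B ≠ ⇑h '' B) (PC NC : Finset (Set ℕ))
    (hPC : ↑PC ⊆ R) (hNC : ↑NC ⊆ R) (hd : Disjoint PC NC) :
    ∃ PC' NC' : Finset (Set ℕ), PC ⊆ PC' ∧ NC ⊆ NC' ∧ ↑PC' ⊆ R ∧ ↑NC' ⊆ R ∧
      Disjoint PC' NC' ∧
      ∀ x ∈ BSigma PC' NC', ∀ k ∈ Kker R G, ⇑g⁻¹ x ≠ ⇑k (⇑h⁻¹ x) := by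
  obtain ⟨B₀, hB₀, hneq⟩ := hsep
  set τ := g * h⁻¹ with hτ
  have hτG : τ ∈ G := mul_mem hg (inv_mem hh)
  have hcan : ⇑h⁻¹ '' (⇑h '' B₀) = B₀ := by
    rw [Set.image_image]; simp
  have hmv : ⇑τ '' (⇑h '' B₀) ≠ ⇑h '' B₀ := by
    rw [hτ, img_mul, hcan]; exact hneq
  have hpool := movedR hr hGaut hτG (mapsR hGaut hh hB₀) hmv
  have hbadfin : ((↑NC : Set (Set ℕ)) ∪ (fun B => ⇑τ '' B) ⁻¹' ↑PC).Finite := by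
    refine (NC.finite_toSet).union (PC.finite_toSet.preimage ?_)
    exact (Set.image_injective.mpr τ.injective).injOn
  obtain ⟨B, hB⟩ := (hpool.diff hbadfin).nonempty
  obtain ⟨⟨hBR, hBmv⟩, hBbad⟩ := hB
  rw [Set.mem_union, not_or] at hBbad
  obtain ⟨hBNC, hBPC⟩ := hBbad
  refine ⟨insert B PC, insert (⇑τ '' B) NC, Finset.subset_insert _ _,
    Finset.subset_insert _ _, ?_, ?_, ?_, ?_⟩
  · rw [Finset.coe_insert]
    exact Set.insert_subset hBR hPC
  · rw [Finset.coe_insert]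
    exact Set.insert_subset (mapsR hGaut hτG hBR) hNC
  · rw [Finset.disjoint_left]
    intro a ha hb
    rw [Finset.mem_insert] at ha hb
    rcases ha with rfl | ha
    · rcases hb with hb | hb
      · exact hBmv hb.symm
      · exact hBNC hb
    · rcases hb with rfl | hb
      · exact hBPC ha
      · exact (Finset.disjoint_left.mp hd ha) hb
  · intro x hx k hk heq
    have hxB : x ∈ B := hx.1 B (Finset.mem_insert_self _ _)
    have hxB' : x ∉ ⇑τ '' B := hx.2 _ (Finset.mem_insert_self _ _)
    have hBt : ⇑h⁻¹ '' B ∈ R := mapsR hGaut (inv_mem hh) hBR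
    have h1 : ⇑h⁻¹ x ∈ ⇑h⁻¹ '' B := Set.mem_image_of_mem _ hxB
    have h2 : ⇑k (⇑h⁻¹ x) ∈ ⇑h⁻¹ '' B := by
      rw [← hk.2 _ hBt]
      exact Set.mem_image_of_mem _ h1
    rw [← heq] at h2
    apply hxB'
    have hxg : x ∈ ⇑g '' (⇑h⁻¹ '' B) := ⟨⇑g⁻¹ x, h2, g.apply_symm_apply x⟩
    rw [← img_mul g h⁻¹ B] at hxg
    rwa [← hτ] at hxg

theorem refine_two {g : Pm} (hg : g ∈ G) (b : ℕ) (PC NC : Finset (Set ℕ))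
    (hPC : ↑PC ⊆ R) (hNC : ↑NC ⊆ R) (hd : Disjoint PC NC) :
    ∃ PC' NC' : Finset (Set ℕ), PC ⊆ PC' ∧ NC ⊆ NC' ∧ ↑PC' ⊆ R ∧ ↑NC' ⊆ R ∧
      Disjoint PC' NC' ∧
      ∀ x ∈ BSigma PC' NC', ∀ k ∈ Kker R G, ⇑g⁻¹ x ≠ ⇑k b := by
  have hpool := avoidR hr b
  have hbadfin : ((fun B => ⇑g '' B) ⁻¹' ↑NC : Set (Set ℕ)).Finite :=
    NC.finite_toSet.preimage (Set.image_injective.mpr g.injective).injOn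
  obtain ⟨B, hB⟩ := (hpool.diff hbadfin).nonempty
  obtain ⟨⟨hBR, hbB⟩, hBbad⟩ := hB
  refine ⟨insert (⇑g '' B) PC, NC, Finset.subset_insert _ _, le_refl _, ?_, hNC, ?_, ?_⟩
  · rw [Finset.coe_insert]
    exact Set.insert_subset (mapsR hGaut hg hBR) hPC
  · rw [Finset.disjoint_left]
    intro a ha hb
    rw [Finset.mem_insert] at ha
    rcases ha with rfl | ha
    · exact hBbad hb
    · exact (Finset.disjoint_left.mp hd ha) hb
  · intro x hx k hk heq
    have hxB : x ∈ ⇑g '' B := hx.1 _ (Finset.mem_insert_self _ _)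
    obtain ⟨a, haB, rfl⟩ := hxB
    rw [Equiv.Perm.inv_def, Equiv.symm_apply_apply] at heq
    rw [heq] at haB
    exact hbB (Kker_img_mem R G hk hBR haB)

end

variable (R G)

/-- demands for the refinement process -/
def Demand := (Pm × Pm) ⊕ (Pm × ℕ)

def DSat (x : ℕ) : Demand → Prop
  | .inl p => ∀ k ∈ Kker R G, ⇑p.1⁻¹ x ≠ ⇑k (⇑p.2⁻¹ x)
  | .inr p => ∀ k ∈ Kker R G, ⇑p.1⁻¹ x ≠ ⇑k p.2

def DLegit : Demand → Prop
  | .inl p => p.1 ∈ G ∧ p.2 ∈ G ∧ ∃ B ∈ R, ⇑p.1 '' B ≠ ⇑p.2 '' B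
  | .inr p => p.1 ∈ G

variable {R G}

section
include hr hGaut

theorem foldD (L : List Demand) (hL : ∀ d ∈ L, DLegit R G d) :
    ∀ PC NC : Finset (Set ℕ), ↑PC ⊆ R → ↑NC ⊆ R → Disjoint PC NC →
    ∃ PC' NC' : Finset (Set ℕ), PC ⊆ PC' ∧ NC ⊆ NC' ∧ ↑PC' ⊆ R ∧ ↑NC' ⊆ R ∧
      Disjoint PC' NC' ∧ ∀ x ∈ BSigma PC' NC', ∀ d ∈ L, DSat R G x d := by
  induction L with
  | nil =>
    intro PC NC h1 h2 h3
    exact ⟨PC, NC, le_refl _, le_refl _, h1, h2, h3, fun x _ d hd => absurd hd (by simp)⟩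
  | cons d L ih =>
    intro PC NC h1 h2 h3
    have hd := hL d (by simp)
    have hstep : ∃ PC₁ NC₁ : Finset (Set ℕ), PC ⊆ PC₁ ∧ NC ⊆ NC₁ ∧ ↑PC₁ ⊆ R ∧ ↑NC₁ ⊆ R ∧
        Disjoint PC₁ NC₁ ∧ ∀ x ∈ BSigma PC₁ NC₁, DSat R G x d := by
      match d with
      | .inl p =>
        obtain ⟨hp1, hp2, hp3⟩ := hd
        obtain ⟨PC₁, NC₁, a1, a2, a3, a4, a5, a6⟩ :=
          refine_one hr hGaut hp1 hp2 hp3 PC NC h1 h2 h3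
        exact ⟨PC₁, NC₁, a1, a2, a3, a4, a5, fun x hx => a6 x hx⟩
      | .inr p =>
        obtain ⟨PC₁, NC₁, a1, a2, a3, a4, a5, a6⟩ :=
          refine_two hr hGaut hd p.2 PC NC h1 h2 h3
        exact ⟨PC₁, NC₁, a1, a2, a3, a4, a5, fun x hx => a6 x hx⟩
    obtain ⟨PC₁, NC₁, a1, a2, a3, a4, a5, a6⟩ := hstep
    obtain ⟨PC', NC', b1, b2, b3, b4, b5, b6⟩ := ih (fun d hd => hL d (by simp [hd])) PC₁ NC₁ a3 a4 a5
    refine ⟨PC', NC', a1.trans b1, a2.trans b2, b3, b4, b5, ?_⟩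
    intro x hx e he
    rw [List.mem_cons] at he
    rcases he with rfl | he
    · exact a6 x (BSigma_mono b1 b2 hx)
    · exact b6 x hx e he

theorem stepEx (Q M : Finset (Set ℕ)) (hQ : ↑Q ⊆ R) (hM : ↑M ⊆ R) (hQM : Disjoint Q M)
    (gs hs : List Pm) (hgs : ∀ g ∈ gs, g ∈ G) (hhs : ∀ h ∈ hs, h ∈ G)
    (hsep : ∀ g ∈ gs, ∀ h ∈ hs, ∃ B ∈ R, ⇑g '' B ≠ ⇑h '' B)
    (pos neg used : Finset ℕ)
    (hinv : ∀ a ∈ pos, ∀ b ∈ neg, ∀ k ∈ Kker R G, ⇑k b ≠ a) :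
    ∃ x : ℕ, x ∈ BSigma Q M ∧ x ∉ used ∧
      (∀ a ∈ pos ∪ (gs.map fun g => ⇑g⁻¹ x).toFinset,
       ∀ b ∈ neg ∪ (hs.map fun h => ⇑h⁻¹ x).toFinset,
       ∀ k ∈ Kker R G, ⇑k b ≠ a) := by
  set L : List (Demand) :=
    ((gs ×ˢ hs).map Sum.inl) ++
    (((gs ×ˢ neg.toList).map Sum.inr) ++ ((hs ×ˢ pos.toList).map Sum.inr)) with hLdef
  have hL : ∀ d ∈ L, DLegit R G d := by
    intro d hd
    rw [hLdef] at hd; erw [List.mem_append, List.mem_append] at hd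
    rcases hd with hd | hd | hd
    · erw [List.mem_map] at hd
      obtain ⟨⟨g, h⟩, hp, rfl⟩ := hd
      rw [List.mem_product] at hp
      exact ⟨hgs _ hp.1, hhs _ hp.2, hsep _ hp.1 _ hp.2⟩
    · erw [List.mem_map] at hd
      obtain ⟨⟨g, b⟩, hp, rfl⟩ := hd
      rw [List.mem_product] at hp
      exact hgs _ hp.1
    · erw [List.mem_map] at hd
      obtain ⟨⟨h, a⟩, hp, rfl⟩ := hd
      rw [List.mem_product] at hp
      exact hhs _ hp.1
  obtain ⟨PC', NC', b1, b2, b3, b4, b5, b6⟩ := foldD hr hGaut L hL Q M hQ hM hQM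
  have hWinf := hr.2 PC' NC' b3 b4 b5
  obtain ⟨x, hxW, hxu⟩ := (hWinf.diff used.finite_toSet).nonempty
  refine ⟨x, BSigma_mono b1 b2 hxW, hxu, ?_⟩
  intro a ha b hb k hk
  rw [Finset.mem_union] at ha hb
  rcases ha with ha | ha <;> rcases hb with hb | hb
  · exact hinv a ha b hb k hk
  · -- a old positive, b = h⁻¹ x new negative
    rw [List.mem_toFinset, List.mem_map] at hb
    obtain ⟨h, hh, rfl⟩ := hb
    have hdm : (Sum.inr (h, a) : Demand) ∈ L := by
      rw [hLdef]; erw [List.mem_append, List.mem_append]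
      right; right
      rw [List.mem_map]
      exact ⟨(h, a), List.mem_product.mpr ⟨hh, Finset.mem_toList.mpr ha⟩, rfl⟩
    have hsat := b6 x hxW _ hdm k⁻¹ (Kker_inv R G hk)
    intro e
    apply hsat
    rw [← e]
    exact (k.symm_apply_apply _).symm
  · -- a = g⁻¹ x new positive, b old negative
    rw [List.mem_toFinset, List.mem_map] at ha
    obtain ⟨g, hg, rfl⟩ := ha
    have hdm : (Sum.inr (g, b) : Demand) ∈ L := by
      rw [hLdef]; erw [List.mem_append, List.mem_append]
      right; left
      rw [List.mem_map]
      exact ⟨(g, b), List.mem_product.mpr ⟨hg, Finset.mem_toList.mpr hb⟩, rfl⟩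
    exact fun e => b6 x hxW _ hdm k hk e.symm
  · -- both new
    rw [List.mem_toFinset, List.mem_map] at ha hb
    obtain ⟨g, hg, rfl⟩ := ha
    obtain ⟨h, hh, rfl⟩ := hb
    have hdm : (Sum.inl (g, h) : Demand) ∈ L := by
      rw [hLdef]; erw [List.mem_append]
      left
      rw [List.mem_map]
      exact ⟨(g, h), List.mem_product.mpr ⟨hg, hh⟩, rfl⟩
    exact fun e => b6 x hxW _ hdm k hk e.symm

end

variable (R G)

/-- the space of requirement tuples -/
abbrev TupleSpace := Finset (Set ℕ) × Finset (Set ℕ) × List Pm × List Pm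

def TSet : Set TupleSpace :=
  {T | ↑T.1 ⊆ R ∧ ↑T.2.1 ⊆ R ∧ (∀ g ∈ T.2.2.1, g ∈ G) ∧ (∀ g ∈ T.2.2.2, g ∈ G)}

def ActiveT (T : TupleSpace) : Prop :=
  Disjoint T.1 T.2.1 ∧ ∀ g ∈ T.2.2.1, ∀ h ∈ T.2.2.2, ∃ B ∈ R, ⇑g '' B ≠ ⇑h '' B

omit hr hGaut in
theorem TSet_countable (hc : R.Countable) (hGc : Set.Countable (G : Set Pm)) :
    (TSet R G).Countable := by
  have hA : {Q : Finset (Set ℕ) | ↑Q ⊆ R}.Countable := by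
    have h1 : {t : Set (Set ℕ) | t.Finite ∧ t ⊆ R}.Countable :=
      Set.countable_setOf_finite_subset hc
    have h2 : {Q : Finset (Set ℕ) | ↑Q ⊆ R} =
        (fun Q : Finset (Set ℕ) => (↑Q : Set (Set ℕ))) ⁻¹' {t | t.Finite ∧ t ⊆ R} := by
      ext Q
      simp [Finset.finite_toSet]
    rw [h2]
    exact h1.preimage Finset.coe_injective
  have hB : {l : List Pm | ∀ g ∈ l, g ∈ G}.Countable := by
    have hcnt : Countable ↥(G : Set Pm) := hGc.to_subtype
    have hrange : {l : List Pm | ∀ g ∈ l, g ∈ G} ⊆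
        Set.range (fun l : List ↥(G : Set Pm) => l.map (fun x => (x : Pm))) := by
      intro l hl
      refine ⟨l.pmap (fun x hx => (⟨x, hx⟩ : ↥(G : Set Pm))) hl, ?_⟩
      induction l with
      | nil => simp
      | cons a l ih =>
        simp only [List.pmap, List.map_cons]
        refine congrArg (List.cons a) ?_
        exact ih (fun g hg => hl g (List.mem_cons_of_mem a hg))
    exact (Set.countable_range _).mono hrange
  have hT : TSet R G = {Q : Finset (Set ℕ) | ↑Q ⊆ R} ×ˢ ({Q : Finset (Set ℕ) | ↑Q ⊆ R} ×ˢ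
      ({l : List Pm | ∀ g ∈ l, g ∈ G} ×ˢ {l : List Pm | ∀ g ∈ l, g ∈ G})) := by
    ext T
    simp [TSet, Set.mem_prod]
  rw [hT]
  exact hA.prod (hA.prod (hB.prod hB))

variable {R G}

include hr hGaut in
/-- the key construction: the set `S` -/
theorem exists_S (hc : R.Countable) (hGc : Set.Countable (G : Set Pm)) :
    ∃ S : Set ℕ,
      (∀ k ∈ Kker R G, ⇑k '' S = S) ∧
      (∀ (Q M : Finset (Set ℕ)) (gs hs : List Pm), ↑Q ⊆ R → ↑M ⊆ R →
        (∀ g ∈ gs, g ∈ G) → (∀ h ∈ hs, h ∈ G) → Disjoint Q M →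
        (∀ g ∈ gs, ∀ h ∈ hs, ∃ B ∈ R, ⇑g '' B ≠ ⇑h '' B) →
        {x | x ∈ BSigma Q M ∧ (∀ g ∈ gs, x ∈ ⇑g '' S) ∧ (∀ h ∈ hs, x ∉ ⇑h '' S)}.Infinite) := by
  obtain ⟨f, hf⟩ := (TSet_countable R G hc hGc).exists_eq_range
    ⟨(∅, ∅, [], []), by simp [TSet]⟩
  have hfT : ∀ i, f i ∈ TSet R G := by
    intro i
    rw [hf]
    exact Set.mem_range_self i
  -- states: (pos, neg, used)
  have hnext : ∀ (t : ℕ) (s : Finset ℕ × Finset ℕ × Finset ℕ),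
      (∀ a ∈ s.1, ∀ b ∈ s.2.1, ∀ k ∈ Kker R G, ⇑k b ≠ a) →
      ∃ s' : Finset ℕ × Finset ℕ × Finset ℕ,
        (∀ a ∈ s'.1, ∀ b ∈ s'.2.1, ∀ k ∈ Kker R G, ⇑k b ≠ a) ∧
        s.1 ⊆ s'.1 ∧ s.2.1 ⊆ s'.2.1 ∧ s.2.2 ⊆ s'.2.2 ∧
        (ActiveT R (f (Nat.unpair t).1) →
          ∃ x, x ∈ BSigma (f (Nat.unpair t).1).1 (f (Nat.unpair t).1).2.1 ∧
            x ∉ s.2.2 ∧ x ∈ s'.2.2 ∧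
            (∀ g ∈ (f (Nat.unpair t).1).2.2.1, ⇑g⁻¹ x ∈ s'.1) ∧
            (∀ h ∈ (f (Nat.unpair t).1).2.2.2, ⇑h⁻¹ x ∈ s'.2.1)) := by
    intro t s hs
    by_cases hA : ActiveT R (f (Nat.unpair t).1)
    · obtain ⟨hQ, hM, hgs, hhs⟩ := hfT (Nat.unpair t).1
      obtain ⟨x, hx1, hx2, hx3⟩ := stepEx hr hGaut _ _ hQ hM hA.1 _ _ hgs hhs hA.2
        s.1 s.2.1 s.2.2 hs
      refine ⟨(s.1 ∪ ((f (Nat.unpair t).1).2.2.1.map fun g => ⇑g⁻¹ x).toFinset,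
        s.2.1 ∪ ((f (Nat.unpair t).1).2.2.2.map fun h => ⇑h⁻¹ x).toFinset,
        insert x s.2.2), hx3, Finset.subset_union_left, Finset.subset_union_left,
        Finset.subset_insert _ _, fun _ => ⟨x, hx1, hx2, Finset.mem_insert_self _ _, ?_, ?_⟩⟩
      · intro g hg
        refine Finset.mem_union_right _ ?_
        rw [List.mem_toFinset, List.mem_map]
        exact ⟨g, hg, rfl⟩
      · intro h hh
        refine Finset.mem_union_right _ ?_
        rw [List.mem_toFinset, List.mem_map]
        exact ⟨h, hh, rfl⟩
    · exact ⟨s, hs, le_refl _, le_refl _, le_refl _, fun h => absurd h hA⟩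
  obtain ⟨st, hst⟩ : ∃ st : ℕ → {s : Finset ℕ × Finset ℕ × Finset ℕ //
      ∀ a ∈ s.1, ∀ b ∈ s.2.1, ∀ k ∈ Kker R G, ⇑k b ≠ a},
      ∀ t, (st t).1.1 ⊆ (st (t + 1)).1.1 ∧ (st t).1.2.1 ⊆ (st (t + 1)).1.2.1 ∧
        (st t).1.2.2 ⊆ (st (t + 1)).1.2.2 ∧
        (ActiveT R (f (Nat.unpair t).1) →
          ∃ x, x ∈ BSigma (f (Nat.unpair t).1).1 (f (Nat.unpair t).1).2.1 ∧
            x ∉ (st t).1.2.2 ∧ x ∈ (st (t + 1)).1.2.2 ∧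
            (∀ g ∈ (f (Nat.unpair t).1).2.2.1, ⇑g⁻¹ x ∈ (st (t + 1)).1.1) ∧
            (∀ h ∈ (f (Nat.unpair t).1).2.2.2, ⇑h⁻¹ x ∈ (st (t + 1)).1.2.1)) := by
    have hinit : ∀ a ∈ (∅ : Finset ℕ), ∀ b ∈ (∅ : Finset ℕ), ∀ k ∈ Kker R G, ⇑k b ≠ a := by
      simp
    let stf : ℕ → {s : Finset ℕ × Finset ℕ × Finset ℕ //
        ∀ a ∈ s.1, ∀ b ∈ s.2.1, ∀ k ∈ Kker R G, ⇑k b ≠ a} := fun n => Nat.rec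
      ⟨(∅, ∅, ∅), hinit⟩
      (fun t p => ⟨Classical.choose (hnext t p.1 p.2),
        (Classical.choose_spec (hnext t p.1 p.2)).1⟩) n
    refine ⟨stf, fun t => ?_⟩
    exact (Classical.choose_spec (hnext t (stf t).1 (stf t).2)).2
  have hmono : ∀ t t', t ≤ t' → (st t).1.1 ⊆ (st t').1.1 ∧ (st t).1.2.1 ⊆ (st t').1.2.1 ∧
      (st t).1.2.2 ⊆ (st t').1.2.2 := by
    intro t t' h
    induction t', h using Nat.le_induction with
    | base => exact ⟨le_refl _, le_refl _, le_refl _⟩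
    | succ n hn ih =>
      obtain ⟨h1, h2, h3, _⟩ := hst n
      exact ⟨ih.1.trans h1, ih.2.1.trans h2, ih.2.2.trans h3⟩
  set S : Set ℕ := {y | ∃ t, ∃ a ∈ (st t).1.1, ∃ k ∈ Kker R G, ⇑k a = y} with hS
  have hSpos : ∀ t, ∀ a ∈ (st t).1.1, a ∈ S := by
    intro t a ha
    exact ⟨t, a, ha, 1, Kker_one R G, rfl⟩
  have hSneg : ∀ t, ∀ b ∈ (st t).1.2.1, b ∉ S := by
    intro t b hb hbS
    obtain ⟨t', a, ha, k, hk, hka⟩ := hbS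
    have h1 : a ∈ (st (max t t')).1.1 := (hmono t' _ (le_max_right t t')).1 ha
    have h2 : b ∈ (st (max t t')).1.2.1 := (hmono t _ (le_max_left t t')).2.1 hb
    exact (st (max t t')).2 a h1 b h2 k⁻¹ (Kker_inv R G hk)
      (by rw [← hka]; exact k.symm_apply_apply a)
  refine ⟨S, ?_, ?_⟩
  · -- K-invariance
    intro k hk
    ext y
    constructor
    · rintro ⟨z, ⟨t, a, ha, k', hk', rfl⟩, rfl⟩
      exact ⟨t, a, ha, k * k', Kker_mul R G hk hk', rfl⟩
    · rintro ⟨t, a, ha, k', hk', rfl⟩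
      refine ⟨⇑k⁻¹ (⇑k' a), ⟨t, a, ha, k⁻¹ * k', Kker_mul R G (Kker_inv R G hk) hk', rfl⟩,
        k.apply_symm_apply _⟩
  · -- the requirement satisfaction
    intro Q M gs hs hQ hM hgs hhs hQM hsep
    have hmem : (Q, M, gs, hs) ∈ TSet R G := ⟨hQ, hM, hgs, hhs⟩
    rw [hf] at hmem
    obtain ⟨i, hi⟩ := hmem
    have hAct : ActiveT R (Q, M, gs, hs) := ⟨hQM, hsep⟩
    have hwit : ∀ n, ∃ x, x ∈ BSigma Q M ∧ x ∉ (st (Nat.pair i n)).1.2.2 ∧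
        x ∈ (st (Nat.pair i n + 1)).1.2.2 ∧
        (∀ g ∈ gs, ⇑g⁻¹ x ∈ (st (Nat.pair i n + 1)).1.1) ∧
        (∀ h ∈ hs, ⇑h⁻¹ x ∈ (st (Nat.pair i n + 1)).1.2.1) := by
      intro n
      have h := (hst (Nat.pair i n)).2.2.2
      rw [Nat.unpair_pair] at h
      simp only [hi] at h
      exact h hAct
    choose w hw1 hw2 hw3 hw4 hw5 using hwit
    have hkey : ∀ n m : ℕ, Nat.pair i n < Nat.pair i m → w n ≠ w m := by
      intro n m hlt he
      have h1 : w n ∈ (st (Nat.pair i m)).1.2.2 :=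
        (hmono (Nat.pair i n + 1) (Nat.pair i m) hlt).2.2 (hw3 n)
      rw [he] at h1
      exact hw2 m h1
    have hinj : Function.Injective w := by
      intro n m he
      by_contra hne
      have hpne : Nat.pair i n ≠ Nat.pair i m := by
        intro hp
        apply hne
        have := congrArg Nat.unpair hp
        rw [Nat.unpair_pair, Nat.unpair_pair] at this
        exact (Prod.mk.injEq _ _ _ _ ▸ this).2
      rcases lt_or_gt_of_ne hpne with h | h
      · exact hkey n m h he
      · exact hkey m n h he.symm
    refine Set.infinite_of_injective_forall_mem hinj ?_
    intro n
    refine ⟨hw1 n, ?_, ?_⟩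
    · intro g hg
      exact ⟨⇑g⁻¹ (w n), hSpos _ _ (hw4 n g hg), g.apply_symm_apply _⟩
    · intro h hh hmem2
      obtain ⟨y, hy, hyx⟩ := hmem2
      have : y = ⇑h⁻¹ (w n) := by
        rw [← hyx]
        exact (h.symm_apply_apply y).symm
      rw [this] at hy
      exact hSneg _ _ (hw5 n h hh) hy

omit hr in
theorem trans_eq {S : Set ℕ} (hinv : ∀ k ∈ Kker R G, ⇑k '' S = S) {g h : Pm}
    (hg : g ∈ G) (hh : h ∈ G) (hsame : ∀ B ∈ R, ⇑g '' B = ⇑h '' B) :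
    ⇑g '' S = ⇑h '' S := by
  have hk : h⁻¹ * g ∈ Kker R G := by
    refine ⟨mul_mem (inv_mem hh) hg, fun B hB => ?_⟩
    rw [img_mul, hsame B hB, ← img_mul]
    simp
  have h1 : ⇑h '' (⇑(h⁻¹ * g) '' S) = ⇑g '' S := by
    rw [← img_mul]
    have : h * (h⁻¹ * g) = g := by group
    rw [this]
  rw [← h1, hinv _ hk]

omit hr hGaut in
theorem img_compl {g : Pm} (X : Set ℕ) : ⇑g '' Xᶜ = (⇑g '' X)ᶜ :=
  Set.image_compl_eq g.bijective

include hGaut in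
omit hr in
theorem closure_bij (X : Set ℕ) {g : Pm} (hg : g ∈ G) :
    Set.BijOn (fun A => ⇑g '' A) (R ∪ (fun k : Pm => ⇑k '' X) '' (G : Set Pm))
      (R ∪ (fun k : Pm => ⇑k '' X) '' (G : Set Pm)) := by
  constructor
  · rintro A (hA | hA)
    · exact Or.inl (mapsR hGaut hg hA)
    · obtain ⟨k, hk, rfl⟩ := hA
      right
      refine ⟨g * k, mul_mem hg hk, ?_⟩
      show ⇑(g * k) '' X = ⇑g '' (⇑k '' X)
      exact img_mul g k X
  constructor
  · exact (Set.image_injective.mpr g.injective).injOn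
  · rintro B (hB | hB)
    · refine ⟨⇑g⁻¹ '' B, Or.inl (mapsR hGaut (inv_mem hg) hB), ?_⟩
      show ⇑g '' (⇑g⁻¹ '' B) = B
      rw [← img_mul]
      simp
    · obtain ⟨k, hk, rfl⟩ := hB
      refine ⟨⇑(g⁻¹ * k) '' X, Or.inr ⟨g⁻¹ * k, mul_mem (inv_mem hg) hk, rfl⟩, ?_⟩
      show ⇑g '' (⇑(g⁻¹ * k) '' X) = ⇑k '' X
      rw [← img_mul]
      have : g * (g⁻¹ * k) = k := by group
      rw [this]

end IncompatAux

theorem incompatible_random_extensions' (R : Set (Set ℕ))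
    (hc : R.Countable) (hr : SetRandom R)
    (G : Subgroup (Equiv.Perm ℕ)) (hGc : Set.Countable (G : Set (Equiv.Perm ℕ)))
    (hGaut : ∀ g ∈ G, Set.BijOn (fun A => ⇑g '' A) R R) :
    ∃ R0 R1 : Set (Set ℕ),
      R ⊆ R0 ∧ R ≠ R0 ∧ R ⊆ R1 ∧ R ≠ R1 ∧
      R0.Countable ∧ R1.Countable ∧ SetRandom R0 ∧ SetRandom R1 ∧
      (∀ g ∈ G, Set.BijOn (fun A => ⇑g '' A) R0 R0) ∧
      (∀ g ∈ G, Set.BijOn (fun A => ⇑g '' A) R1 R1) ∧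
      ¬ ∃ R' : Set (Set ℕ), SetRandom R' ∧ R0 ∪ R1 ⊆ R' := by
  classical
  obtain ⟨S, hKinv, hReq⟩ := exists_S hr hGaut hc hGc
  set R0 : Set (Set ℕ) := R ∪ (fun k : Pm => ⇑k '' S) '' (G : Set (Equiv.Perm ℕ))
    with hR0
  set R1 : Set (Set ℕ) := R ∪ (fun k : Pm => ⇑k '' Sᶜ) '' (G : Set (Equiv.Perm ℕ))
    with hR1
  -- S differs from every element of R, and so does Sᶜ
  have hSneR : ∀ A ∈ R, S ≠ A := by
    intro A hA hSA
    have h := hReq ∅ {A} [1] [] (by simp) (by simpa using hA)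
      (by simpa using one_mem G) (by simp) (by simp) (by simp)
    obtain ⟨x, hx1, hx2, _⟩ := h.nonempty
    have hxA : x ∉ A := hx1.2 A (Finset.mem_singleton_self A)
    have hxS : x ∈ S := by
      have := hx2 1 (by simp)
      simpa using this
    rw [hSA] at hxS
    exact hxA hxS
  have hScneR : ∀ A ∈ R, Sᶜ ≠ A := by
    intro A hA hSA
    have h := hReq {A} ∅ [1] [] (by simpa using hA) (by simp)
      (by simpa using one_mem G) (by simp) (by simp) (by simp)
    obtain ⟨x, hx1, hx2, _⟩ := h.nonempty
    have hxA : x ∈ A := hx1.1 A (Finset.mem_singleton_self A)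
    have hxS : x ∈ S := by
      have := hx2 1 (by simp)
      simpa using this
    rw [← hSA] at hxA
    exact hxA hxS
  have hSnotR : S ∉ R := fun h => hSneR S h rfl
  have hScnotR : Sᶜ ∉ R := fun h => hScneR (Sᶜ) h rfl
  have hSR0 : S ∈ R0 := Or.inr ⟨1, one_mem G, by simp⟩
  have hScR1 : Sᶜ ∈ R1 := Or.inr ⟨1, one_mem G, by simp⟩
  refine ⟨R0, R1, Set.subset_union_left, ?_, Set.subset_union_left, ?_, ?_, ?_, ?_, ?_,
    fun g hg => closure_bij hGaut S hg,
    fun g hg => closure_bij hGaut (Sᶜ) hg, ?_⟩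
  · intro h
    rw [← h] at hSR0
    exact hSnotR hSR0
  · intro h
    rw [← h] at hScR1
    exact hScnotR hScR1
  · exact hc.union (hGc.image _)
  · exact hc.union (hGc.image _)
  · -- SetRandom R0
    constructor
    · intro X Y hXY
      refine (hr.1 X Y hXY).mono ?_
      rintro A ⟨hA, h2⟩
      exact ⟨Or.inl hA, h2⟩
    · intro P N hP hN hPN
      set pick : Set ℕ → Pm := fun Z =>
        if hZ : ∃ g, g ∈ G ∧ ⇑g '' S = Z then Classical.choose hZ else 1 with hpick
      have hpickspec : ∀ Z ∈ R0, Z ∉ R → (pick Z ∈ G ∧ ⇑(pick Z) '' S = Z) := by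
        intro Z hZ0 hZR
        have hex : ∃ g, g ∈ G ∧ ⇑g '' S = Z := by
          rcases hZ0 with h | h
          · exact absurd h hZR
          · obtain ⟨k, hk, hke⟩ := h
            exact ⟨k, hk, hke⟩
        simp only [hpick]
        rw [dif_pos hex]
        exact Classical.choose_spec hex
      set Q := P.filter (· ∈ R) with hQ
      set M := N.filter (· ∈ R) with hM
      set Pn := P.filter (· ∉ R) with hPn
      set Nn := N.filter (· ∉ R) with hNn
      set gs := Pn.toList.map pick with hgs
      set hs := Nn.toList.map pick with hhs
      have hPnspec : ∀ Z ∈ Pn, pick Z ∈ G ∧ ⇑(pick Z) '' S = Z := by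
        intro Z hZ
        rw [hPn, Finset.mem_filter] at hZ
        exact hpickspec Z (hP hZ.1) hZ.2
      have hNnspec : ∀ Z ∈ Nn, pick Z ∈ G ∧ ⇑(pick Z) '' S = Z := by
        intro Z hZ
        rw [hNn, Finset.mem_filter] at hZ
        exact hpickspec Z (hN hZ.1) hZ.2
      have key := hReq Q M gs hs ?_ ?_ ?_ ?_ ?_ ?_
      · refine key.mono ?_
        rintro x ⟨hxB, hxpos, hxneg⟩
        constructor
        · intro A hA
          by_cases hAR : A ∈ R
          · exact hxB.1 A (by rw [hQ, Finset.mem_filter]; exact ⟨hA, hAR⟩)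
          · have hAPn : A ∈ Pn := by rw [hPn, Finset.mem_filter]; exact ⟨hA, hAR⟩
            have := hxpos (pick A) (by
              rw [hgs, List.mem_map]
              exact ⟨A, Finset.mem_toList.mpr hAPn, rfl⟩)
            rwa [(hPnspec A hAPn).2] at this
        · intro A hA
          by_cases hAR : A ∈ R
          · exact hxB.2 A (by rw [hM, Finset.mem_filter]; exact ⟨hA, hAR⟩)
          · have hANn : A ∈ Nn := by rw [hNn, Finset.mem_filter]; exact ⟨hA, hAR⟩
            have := hxneg (pick A) (by
              rw [hhs, List.mem_map]
              exact ⟨A, Finset.mem_toList.mpr hANn, rfl⟩)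
            rwa [(hNnspec A hANn).2] at this
      · intro A hA
        rw [hQ] at hA
        simp only [Finset.coe_filter, Set.mem_setOf_eq] at hA
        exact hA.2
      · intro A hA
        rw [hM] at hA
        simp only [Finset.coe_filter, Set.mem_setOf_eq] at hA
        exact hA.2
      · intro g hg
        rw [hgs, List.mem_map] at hg
        obtain ⟨Z, hZ, rfl⟩ := hg
        exact (hPnspec Z (Finset.mem_toList.mp hZ)).1
      · intro h hh
        rw [hhs, List.mem_map] at hh
        obtain ⟨Z, hZ, rfl⟩ := hh
        exact (hNnspec Z (Finset.mem_toList.mp hZ)).1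
      · exact Finset.disjoint_filter_filter hPN
      · intro g hg h hh
        rw [hgs, List.mem_map] at hg
        rw [hhs, List.mem_map] at hh
        obtain ⟨Z, hZ, rfl⟩ := hg
        obtain ⟨Z', hZ', rfl⟩ := hh
        by_contra hcon
        push_neg at hcon
        have hZPn := Finset.mem_toList.mp hZ
        have hZNn := Finset.mem_toList.mp hZ'
        have heq : ⇑(pick Z) '' S = ⇑(pick Z') '' S :=
          trans_eq hKinv (hPnspec Z hZPn).1 (hNnspec Z' hZNn).1 hcon
        rw [(hPnspec Z hZPn).2, (hNnspec Z' hZNn).2] at heq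
        have hZP : Z ∈ P := (Finset.mem_filter.mp hZPn).1
        have hZN : Z' ∈ N := (Finset.mem_filter.mp hZNn).1
        rw [heq] at hZP
        exact (Finset.disjoint_left.mp hPN hZP) hZN
  · -- SetRandom R1
    constructor
    · intro X Y hXY
      refine (hr.1 X Y hXY).mono ?_
      rintro A ⟨hA, h2⟩
      exact ⟨Or.inl hA, h2⟩
    · intro P N hP hN hPN
      set pick : Set ℕ → Pm := fun Z =>
        if hZ : ∃ g, g ∈ G ∧ ⇑g '' Sᶜ = Z then Classical.choose hZ else 1 with hpick
      have hpickspec : ∀ Z ∈ R1, Z ∉ R → (pick Z ∈ G ∧ ⇑(pick Z) '' Sᶜ = Z) := by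
        intro Z hZ0 hZR
        have hex : ∃ g, g ∈ G ∧ ⇑g '' Sᶜ = Z := by
          rcases hZ0 with h | h
          · exact absurd h hZR
          · obtain ⟨k, hk, hke⟩ := h
            exact ⟨k, hk, hke⟩
        simp only [hpick]
        rw [dif_pos hex]
        exact Classical.choose_spec hex
      set Q := P.filter (· ∈ R) with hQ
      set M := N.filter (· ∈ R) with hM
      set Pn := P.filter (· ∉ R) with hPn
      set Nn := N.filter (· ∉ R) with hNn
      -- note the roles are swapped here!
      set gs := Nn.toList.map pick with hgs
      set hs := Pn.toList.map pick with hhs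
      have hPnspec : ∀ Z ∈ Pn, pick Z ∈ G ∧ ⇑(pick Z) '' Sᶜ = Z := by
        intro Z hZ
        rw [hPn, Finset.mem_filter] at hZ
        exact hpickspec Z (hP hZ.1) hZ.2
      have hNnspec : ∀ Z ∈ Nn, pick Z ∈ G ∧ ⇑(pick Z) '' Sᶜ = Z := by
        intro Z hZ
        rw [hNn, Finset.mem_filter] at hZ
        exact hpickspec Z (hN hZ.1) hZ.2
      have key := hReq Q M gs hs ?_ ?_ ?_ ?_ ?_ ?_
      · refine key.mono ?_
        rintro x ⟨hxB, hxpos, hxneg⟩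
        constructor
        · intro A hA
          by_cases hAR : A ∈ R
          · exact hxB.1 A (by rw [hQ, Finset.mem_filter]; exact ⟨hA, hAR⟩)
          · have hAPn : A ∈ Pn := by rw [hPn, Finset.mem_filter]; exact ⟨hA, hAR⟩
            have hx := hxneg (pick A) (by
              rw [hhs, List.mem_map]
              exact ⟨A, Finset.mem_toList.mpr hAPn, rfl⟩)
            rw [← (hPnspec A hAPn).2, img_compl]
            exact hx
        · intro A hA
          by_cases hAR : A ∈ R
          · exact hxB.2 A (by rw [hM, Finset.mem_filter]; exact ⟨hA, hAR⟩)
          · have hANn : A ∈ Nn := by rw [hNn, Finset.mem_filter]; exact ⟨hA, hAR⟩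
            have hx := hxpos (pick A) (by
              rw [hgs, List.mem_map]
              exact ⟨A, Finset.mem_toList.mpr hANn, rfl⟩)
            rw [← (hNnspec A hANn).2, img_compl]
            intro hcon
            exact hcon hx
      · intro A hA
        rw [hQ] at hA
        simp only [Finset.coe_filter, Set.mem_setOf_eq] at hA
        exact hA.2
      · intro A hA
        rw [hM] at hA
        simp only [Finset.coe_filter, Set.mem_setOf_eq] at hA
        exact hA.2
      · intro g hg
        rw [hgs, List.mem_map] at hg
        obtain ⟨Z, hZ, rfl⟩ := hg
        exact (hNnspec Z (Finset.mem_toList.mp hZ)).1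
      · intro h hh
        rw [hhs, List.mem_map] at hh
        obtain ⟨Z, hZ, rfl⟩ := hh
        exact (hPnspec Z (Finset.mem_toList.mp hZ)).1
      · exact Finset.disjoint_filter_filter hPN
      · intro g hg h hh
        rw [hgs, List.mem_map] at hg
        rw [hhs, List.mem_map] at hh
        obtain ⟨Z, hZ, rfl⟩ := hg
        obtain ⟨Z', hZ', rfl⟩ := hh
        by_contra hcon
        push_neg at hcon
        have hZNn := Finset.mem_toList.mp hZ
        have hZPn := Finset.mem_toList.mp hZ'
        have heq : ⇑(pick Z) '' S = ⇑(pick Z') '' S :=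
          trans_eq hKinv (hNnspec Z hZNn).1 (hPnspec Z' hZPn).1 hcon
        have heqc : ⇑(pick Z) '' Sᶜ = ⇑(pick Z') '' Sᶜ := by
          rw [img_compl, img_compl, heq]
        rw [(hNnspec Z hZNn).2, (hPnspec Z' hZPn).2] at heqc
        have hZN : Z ∈ N := (Finset.mem_filter.mp hZNn).1
        have hZP : Z' ∈ P := (Finset.mem_filter.mp hZPn).1
        rw [heqc] at hZN
        exact (Finset.disjoint_left.mp hPN hZP) hZN
  · -- incompatibility
    rintro ⟨R', hR', hsub⟩
    have h1 : S ∈ R' := hsub (Or.inl hSR0)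
    have h2 : Sᶜ ∈ R' := hsub (Or.inr hScR1)
    have h := hR'.2 {S, Sᶜ} ∅ ?_ (by simp) (by simp)
    · have hempty : BSigma {S, Sᶜ} ∅ = ∅ := by
        ext x
        simp only [BSigma, Set.mem_setOf_eq, Finset.mem_insert, Finset.mem_singleton,
          Set.mem_empty_iff_false, iff_false]
        rintro ⟨hpos, -⟩
        have hxS : x ∈ S := hpos S (Or.inl rfl)
        have hxSc : x ∈ Sᶜ := hpos (Sᶜ) (Or.inr rfl)
        exact hxSc hxS
      rw [hempty] at h
      exact Set.not_infinite.mpr (Set.finite_empty) h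
    · intro A hA
      rw [Finset.coe_insert, Finset.coe_singleton] at hA
      rcases hA with rfl | rfl
      · exact h1
      · exact h2


theorem incompatible_random_extensions (R : Set (Set ℕ))
    (hc : R.Countable) (hr : SetRandom R)
    (G : Subgroup (Equiv.Perm ℕ)) (hGc : Set.Countable (G : Set (Equiv.Perm ℕ)))
    (hGaut : ∀ g ∈ G, Set.BijOn (fun A => ⇑g '' A) R R) :
    ∃ R0 R1 : Set (Set ℕ),
      R ⊆ R0 ∧ R ≠ R0 ∧ R ⊆ R1 ∧ R ≠ R1 ∧
      R0.Countable ∧ R1.Countable ∧ SetRandom R0 ∧ SetRandom R1 ∧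
      (∀ g ∈ G, Set.BijOn (fun A => ⇑g '' A) R0 R0) ∧
      (∀ g ∈ G, Set.BijOn (fun A => ⇑g '' A) R1 R1) ∧
      ¬ ∃ R' : Set (Set ℕ), SetRandom R' ∧ R0 ∪ R1 ⊆ R' :=
  incompatible_random_extensions' R hc hr G hGc hGaut
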